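/- Let F, G : E → ℝ be of class C². Then for every x ∈ E, the Hamiltonian vector field of the Poisson bracket {F, G} equals minus the commutator of the Hamiltonian vector fields of F and G; explicitly, σ (gradient {F, G} x) = (D X_F)_x (X_G(x)) - (D X_G)_x (X_F(x)), where (D X_F)_x denotes the Fréchet derivative at x of the map X_F : E → E. (This is the paper's Corollary that the map sending a differentiable generator to its Hamiltonian vector field is a homomorphism of Lie algebras, via the displayed identity {F,G}^A = -[F,G]^A.) -/

import Mathlib

open RealInnerProductSpace

/-- The Poisson bracket of two functionals on a real Hilbert space `E`,
for a skew-adjoint continuous linear map `σ`: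
`{F, G}(x) = ⟪gradient F x, σ (gradient G x)⟫`. -/
noncomputable def poissonBracket {E : Type*} [NormedAddCommGroup E]
    [InnerProductSpace ℝ E] [CompleteSpace E]
    (σ : E →L[ℝ] E) (F G : E → ℝ) : E → ℝ :=
  fun x => ⟪gradient F x, σ (gradient G x)⟫

/-- The Hamiltonian vector field of a functional `F` : `X_F (x) = σ (gradient F x)`. -/
noncomputable def hamVF {E : Type*} [NormedAddCommGroup E]
    [InnerProductSpace ℝ E] [CompleteSpace E]
    (σ : E →L[ℝ] E) (F : E → ℝ) : E → E :=
  fun x => σ (gradient F x)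

section Aux

variable {E : Type*} [NormedAddCommGroup E] [InnerProductSpace ℝ E] [CompleteSpace E]

lemma gradient_eq_comp (F : E → ℝ) :
    gradient F = (InnerProductSpace.toDual ℝ E).symm ∘ fderiv ℝ F := rfl

lemma differentiable_gradient {F : E → ℝ} (hF : ContDiff ℝ 2 F) :
    Differentiable ℝ (gradient F) := by
  rw [gradient_eq_comp]
  exact (InnerProductSpace.toDual ℝ E).symm.differentiable.comp
    ((hF.fderiv_right (m := 1) (by norm_num)).differentiable one_ne_zero)

lemma inner_fderiv_gradient {F : E → ℝ} (hF : ContDiff ℝ 2 F) (x y z : E) :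
    ⟪fderiv ℝ (gradient F) x y, z⟫ = fderiv ℝ (fderiv ℝ F) x y z := by
  rw [gradient_eq_comp, LinearIsometryEquiv.comp_fderiv]
  exact InnerProductSpace.toDual_symm_apply

lemma inner_fderiv_gradient_symm {F : E → ℝ} (hF : ContDiff ℝ 2 F) (x y z : E) :
    ⟪fderiv ℝ (gradient F) x y, z⟫ = ⟪fderiv ℝ (gradient F) x z, y⟫ := by
  rw [inner_fderiv_gradient hF, inner_fderiv_gradient hF]
  exact hF.contDiffAt.isSymmSndFDerivAt (by simp [minSmoothness_of_isRCLikeNormedField]) y z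

end Aux

/-- The Hamiltonian vector field of the Poisson bracket `{F, G}` is minus the
commutator of the Hamiltonian vector fields of `F` and `G`. -/
theorem hamVF_poissonBracket_eq_neg_commutator
    {E : Type*} [NormedAddCommGroup E] [InnerProductSpace ℝ E] [CompleteSpace E]
    (σ : E →L[ℝ] E)
    (hσ : ∀ x y : E, ⟪σ x, y⟫ = -⟪x, σ y⟫)
    (F G : E → ℝ) (hF : ContDiff ℝ 2 F) (hG : ContDiff ℝ 2 G) :
    ∀ x : E,
      σ (gradient (poissonBracket σ F G) x)
        = fderiv ℝ (hamVF σ F) x (hamVF σ G x) - fderiv ℝ (hamVF σ G) x (hamVF σ F x) := by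
  intro x
  have hdF := differentiable_gradient hF
  have hdG := differentiable_gradient hG
  -- fderiv of hamVF
  have hamF : fderiv ℝ (hamVF σ F) x = σ.comp (fderiv ℝ (gradient F) x) :=
    (σ.hasFDerivAt.comp x (hdF x).hasFDerivAt).fderiv
  have hamG : fderiv ℝ (hamVF σ G) x = σ.comp (fderiv ℝ (gradient G) x) :=
    (σ.hasFDerivAt.comp x (hdG x).hasFDerivAt).fderiv
  rw [hamF, hamG]
  have key : gradient (poissonBracket σ F G) x
      = fderiv ℝ (gradient F) x (σ (gradient G x))
        - fderiv ℝ (gradient G) x (σ (gradient F x)) := by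
    apply ext_inner_right ℝ
    intro y
    have h1 : ⟪gradient (poissonBracket σ F G) x, y⟫
        = fderiv ℝ (poissonBracket σ F G) x y :=
      InnerProductSpace.toDual_symm_apply
    have hdσG : DifferentiableAt ℝ (fun t => σ (gradient G t)) x :=
      σ.differentiableAt.comp x (hdG x)
    have h2 : fderiv ℝ (poissonBracket σ F G) x y
        = ⟪gradient F x, fderiv ℝ (fun t => σ (gradient G t)) x y⟫
          + ⟪fderiv ℝ (gradient F) x y, σ (gradient G x)⟫ :=
      fderiv_inner_apply ℝ (hdF x) hdσG y
    have h3 : fderiv ℝ (fun t => σ (gradient G t)) x y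
        = σ (fderiv ℝ (gradient G) x y) := by
      rw [show (fun t => σ (gradient G t)) = ⇑σ ∘ gradient G from rfl,
        (σ.hasFDerivAt.comp x (hdG x).hasFDerivAt).fderiv]; rfl
    rw [h1, h2, h3]
    have t1 : ⟪gradient F x, σ (fderiv ℝ (gradient G) x y)⟫
        = -⟪fderiv ℝ (gradient G) x (σ (gradient F x)), y⟫ := by
      have := hσ (gradient F x) (fderiv ℝ (gradient G) x y)
      have h := inner_fderiv_gradient_symm hG x y (σ (gradient F x))
      rw [real_inner_comm] at h
      linarith [this, h]
    have t2 : ⟪fderiv ℝ (gradient F) x y, σ (gradient G x)⟫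
        = ⟪fderiv ℝ (gradient F) x (σ (gradient G x)), y⟫ := by
      rw [inner_fderiv_gradient_symm hF x y (σ (gradient G x))]
    rw [t1, t2, inner_sub_left]
    ring
  simp only [hamVF, key, map_sub, ContinuousLinearMap.coe_comp', Function.comp_apply]
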